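/- In linear grouping, the up-rounded instance is a predecessor of the down-rounded instance together with the first group: J^(hi) ⪯ J^(lo) ∪ J₁^(hi), where ⪯ is the size-dominance injection relation on multisets of 1D items. -/

import Mathlib

/-- `MPred A B` : the multiset `A` of 1D item sizes is a predecessor of `B`,
i.e. there is an injection from `A` into `B` that does not decrease sizes. -/
def MPred (A B : Multiset ℝ) : Prop := ∃ C ≤ B, Multiset.Rel (· ≤ ·) A C

/-- Linear grouping: items `0,…,m-1` have non-increasing sizes `s 0 ≥ s 1 ≥ …`;
group of item `i` is `i / q` (0-indexed, each group has `q` items, the last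
possibly fewer), the largest size in group `g` is `s (q*g)`.
`J^(hi)` rounds each item up to the largest size of its group;
`J^(lo)` rounds each item of every non-last group down to the largest size of
the next group; `J₁^(hi)` is the first group rounded up (all of size `s 0`).
Then `J^(hi) ⪯ J^(lo) ∪ J₁^(hi)`. -/
theorem lingroup_pred (m q : ℕ) (hq : 0 < q) (hm : 0 < m) (s : ℕ → ℝ)
    (hmono : ∀ i j, i ≤ j → j < m → s j ≤ s i) :
    MPred ((Multiset.range m).map (fun i => s (q * (i / q))))
      ((((Multiset.range m).filter (fun i => q * (i / q + 1) < m)).map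
          (fun i => s (q * (i / q + 1)))) +
        (Multiset.range (min q m)).map (fun _ => s 0)) := by
  refine ⟨(Multiset.range (m - q)).map (fun i => s (q * (i / q + 1))) +
      (Multiset.range (min q m)).map (fun _ => s 0), ?_, ?_⟩
  · apply add_le_add_left
    apply Multiset.map_le_map
    rw [Multiset.le_filter]
    constructor
    · exact Multiset.range_le.mpr (Nat.sub_le m q)
    · intro a ha
      simp only [Multiset.mem_range] at ha
      have h1 : q * (a / q) ≤ a := Nat.mul_div_le a q
      have : q * (a / q + 1) ≤ a + q := by
        rw [Nat.mul_add, Nat.mul_one]; omega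
      omega
  · have : (Multiset.range m).map (fun i => s (q * (i / q))) =
        (Multiset.range (m - q)).map (fun i => s (q * (i / q + 1))) +
        (Multiset.range (min q m)).map (fun _ => s 0) := by
      rcases le_or_gt m q with h | h
      · have h1 : m - q = 0 := by omega
        have h2 : min q m = m := by omega
        rw [h1, h2]
        simp only [Multiset.range_zero, Multiset.map_zero, zero_add]
        apply Multiset.map_congr rfl
        intro x hx
        simp only [Multiset.mem_range] at hx
        have : x / q = 0 := Nat.div_eq_of_lt (by omega)
        rw [this, Nat.mul_zero]
      · have h2 : min q m = q := by omega
        have hm' : m = q + (m - q) := by omega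
        rw [h2]
        conv_lhs => rw [hm', Multiset.range_add, Multiset.map_add, Multiset.map_map]
        rw [add_comm ((Multiset.range (m - q)).map _ )]
        congr 1
        · apply Multiset.map_congr rfl
          intro x hx
          simp only [Multiset.mem_range] at hx
          have : x / q = 0 := Nat.div_eq_of_lt (by omega)
          simp [this]
        · apply Multiset.map_congr rfl
          intro x hx
          simp only [Function.comp_apply]
          have : (q + x) / q = x / q + 1 := by
            rw [Nat.add_comm, Nat.add_div_right _ hq]
          rw [this]
    rw [this]
    exact Multiset.rel_refl_of_refl_on fun x _ => le_refl x
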